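/- The fundamental vector field of the one-parameter subgroup λ₁ ↦ ((λ₁,0), I) of the action Φ (i.e., the derivative at λ₁ = 0 of λ₁ ↦ Φ(((λ₁,0),I),(x,p))) equals -(1/√(-p)) ∂ₓ, and the fundamental vector field of λ₅ ↦ ((0,λ₅), I) equals -((x/√(-p)) ∂ₓ + 2√(-p) ∂ₚ); i.e., up to sign these are X₁ and X₅. -/

import Mathlib

/-- The action of the `ℝ²` factor on `O = {p < 0}`. -/
noncomputable def PhiR2 (lam₁ lam₅ : ℝ) (z : ℝ × ℝ) : ℝ × ℝ :=
  ((Real.sqrt (-z.2) * z.1 - lam₁) / (Real.sqrt (-z.2) + lam₅),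
    -(Real.sqrt (-z.2) + lam₅) ^ 2)

/-- the fundamental vector fields of the one-parameter subgroups
`λ₁ ↦ ((λ₁,0),I)` and `λ₅ ↦ ((0,λ₅),I)` are `-X₁ = -(1/√(-p))∂ₓ` and
`-X₅ = -((x/√(-p))∂ₓ + 2√(-p)∂ₚ)`, respectively. -/
theorem fundamental_vector_fields (x p : ℝ) (hp : p < 0) :
    HasDerivAt (fun s : ℝ => PhiR2 s 0 (x, p))
      ((-(1 / Real.sqrt (-p)), 0) : ℝ × ℝ) 0 ∧
    HasDerivAt (fun s : ℝ => PhiR2 0 s (x, p))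
      ((-(x / Real.sqrt (-p)), -(2 * Real.sqrt (-p))) : ℝ × ℝ) 0 := by
  have hr : 0 < Real.sqrt (-p) := Real.sqrt_pos.mpr (by linarith)
  set r := Real.sqrt (-p) with hrdef
  have hrne : r ≠ 0 := ne_of_gt hr
  constructor
  · have h1 : HasDerivAt (fun s : ℝ => (r * x - s) / (r + 0)) (-(1 / r)) 0 := by
      have := ((hasDerivAt_const (0 : ℝ) (r * x)).sub (hasDerivAt_id 0)).div_const (r + 0)
      refine this.congr_deriv ?_
      simp only [add_zero]
      ring
    have h2 : HasDerivAt (fun _ : ℝ => -(r + 0) ^ 2) (0 : ℝ) 0 := hasDerivAt_const _ _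
    exact h1.prodMk h2
  · have h1 : HasDerivAt (fun s : ℝ => (r * x - 0) / (r + s)) (-(x / r)) 0 := by
      have hden : r + 0 ≠ 0 := by simpa using hrne
      have := (hasDerivAt_const (0 : ℝ) (r * x - 0)).div
        ((hasDerivAt_const (0 : ℝ) r).add (hasDerivAt_id 0)) hden
      refine this.congr_deriv ?_
      simp only [Pi.add_apply, id, add_zero]
      field_simp
      ring
    have h2 : HasDerivAt (fun s : ℝ => -(r + s) ^ 2) (-(2 * r)) 0 := by
      have := (((hasDerivAt_const (0 : ℝ) r).add (hasDerivAt_id 0)).pow 2).neg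
      refine this.congr_deriv ?_
      simp only [Pi.add_apply, id, add_zero]
      ring
    exact h1.prodMk h2
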